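/- Let A = ℝ[a₂, a₃, a₄, …] be the polynomial ℝ-algebra in countably many variables a_n indexed by integers n ≥ 2, and adopt the conventions a₁ = 1 and a_n = 0 for n ≤ 0. Let Δ : A → A ⊗ A be the unique ℝ-algebra homomorphism with Δ(a_n) = Σ_{k=1}^{n} (Σ_{l₁+⋯+l_k=n, lᵢ≥1} a_{l₁}a_{l₂}⋯a_{l_k}) ⊗ a_k for every n ≥ 2. Then Δ is coassociative: (Δ ⊗ id) ∘ Δ = (id ⊗ Δ) ∘ Δ as algebra maps A → A ⊗ A ⊗ A. -/

import Mathlib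

set_option maxHeartbeats 1000000
set_option synthInstance.maxHeartbeats 400000

open scoped TensorProduct

/-- The Faà di Bruno algebra: the polynomial `ℝ`-algebra on variables `a_n`, `n ≥ 2`. -/
abbrev FdB : Type := MvPolynomial {m : ℕ // 2 ≤ m} ℝ

/-- The generators `a_n` of the Faà di Bruno algebra, with the conventions `a₁ = 1`
and `a_n = 0` for `n ≤ 0`. -/
noncomputable def FdBgen (n : ℕ) : FdB :=
  if h : 2 ≤ n then MvPolynomial.X ⟨n, h⟩ else if n = 1 then 1 else 0

/-- The value of the Faà di Bruno coproduct on the generator `a_n`: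
`Δ(a_n) = Σ_{k=1}^n (Σ_{l₁+⋯+l_k=n, lᵢ≥1} a_{l₁}⋯a_{l_k}) ⊗ a_k`. -/
noncomputable def FdBcoprodVal (n : ℕ) : FdB ⊗[ℝ] FdB :=
  ∑ k ∈ Finset.Icc 1 n,
    (∑ l ∈ (Finset.Nat.antidiagonalTuple k n).filter (fun l => ∀ i, 1 ≤ l i),
        ∏ i, FdBgen (l i)) ⊗ₜ[ℝ] FdBgen k

namespace FdBAux

open Finset Polynomial

variable {B : Type*} [CommRing B]

/-! ### Combinatorial bridge -/

lemma tuple_eq_finsupp (f : ℕ → B) (k m : ℕ) :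
    ∑ l ∈ Finset.Nat.antidiagonalTuple k m, ∏ i, f (l i)
      = ∑ l ∈ finsuppAntidiag (range k) m, ∏ j ∈ range k, f (l j) := by
  refine Finset.sum_bij'
    (i := fun l _ => Finsupp.onFinset (range k)
      (fun j => if h : j < k then l ⟨j, h⟩ else 0)
      (fun j hj => by by_contra h; simp [mem_range] at h; simp [dif_neg (by omega : ¬ j < k)] at hj))
    (j := fun d _ => fun i : Fin k => d i) ?hi ?hj ?li ?ri ?h
  case hi =>
    intro l hl
    rw [Finset.Nat.mem_antidiagonalTuple] at hl
    beta_reduce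
    rw [mem_finsuppAntidiag]
    refine ⟨?_, Finsupp.support_onFinset_subset⟩
    rw [← hl, ← Fin.sum_univ_eq_sum_range (fun j => (Finsupp.onFinset (range k)
      (fun j => if h : j < k then l ⟨j, h⟩ else 0) _ : ℕ →₀ ℕ) j) k]
    exact Finset.sum_congr rfl fun i _ => by simp [i.isLt]
  case hj =>
    intro d hd
    rw [mem_finsuppAntidiag] at hd
    beta_reduce
    rw [Finset.Nat.mem_antidiagonalTuple, ← hd.1,
      ← Fin.sum_univ_eq_sum_range (fun j => d j) k]
  case li =>
    intro l hl
    funext i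
    simp [i.isLt]
  case ri =>
    intro d hd
    rw [mem_finsuppAntidiag] at hd
    ext j
    by_cases h : j < k
    · simp [h]
    · simp only [Finsupp.onFinset_apply, dif_neg h]
      by_contra hc
      exact h (mem_range.mp (hd.2 (Finsupp.mem_support_iff.mpr fun he => hc he.symm)))
  case h =>
    intro l hl
    rw [← Fin.prod_univ_eq_prod_range (fun j => f ((Finsupp.onFinset (range k)
      (fun j => if h : j < k then l ⟨j, h⟩ else 0) _ : ℕ →₀ ℕ) j)) k]
    exact Finset.prod_congr rfl fun i _ => by simp [i.isLt]

/-! ### The polynomial layer -/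

noncomputable def polyOf (f : ℕ → B) (n : ℕ) : B[X] := ∑ m ∈ range (n + 1), C (f m) * X ^ m

lemma coeff_polyOf (f : ℕ → B) {n m : ℕ} (h : m ≤ n) : (polyOf f n).coeff m = f m := by
  unfold polyOf
  rw [finset_sum_coeff]
  rw [Finset.sum_eq_single m (fun b _ hb => by simp [coeff_C_mul, coeff_X_pow, Ne.symm hb])
    (fun hm => absurd (mem_range.mpr (by omega)) hm)]
  simp

lemma coeff_pow_eq_zero {P : B[X]} (h0 : P.coeff 0 = 0) {k m : ℕ} (h : m < k) :
    (P ^ k).coeff m = 0 :=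
  (X_pow_dvd_iff.mp (pow_dvd_pow_of_dvd (X_dvd_iff.mpr h0) k)) m h

lemma coeff_polyOf_pow (f : ℕ → B) {n k m : ℕ} (h : m ≤ n) :
    ((polyOf f n) ^ k).coeff m = ∑ l ∈ Finset.Nat.antidiagonalTuple k m, ∏ i, f (l i) := by
  have := PowerSeries.coeff_pow k m ((polyOf f n : B[X]) : PowerSeries B)
  rw [← Polynomial.coe_pow, Polynomial.coeff_coe] at this
  rw [this, tuple_eq_finsupp]
  refine Finset.sum_congr rfl fun l hl => Finset.prod_congr rfl fun j hj => ?_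
  rw [mem_finsuppAntidiag] at hl
  rw [Polynomial.coeff_coe, coeff_polyOf]
  have : l j ≤ m := hl.1 ▸ Finset.single_le_sum (fun _ _ => Nat.zero_le _) hj
  omega

lemma filter_tuple_sum (f : ℕ → B) (hf : f 0 = 0) (k m : ℕ) :
    ∑ l ∈ (Finset.Nat.antidiagonalTuple k m).filter (fun l => ∀ i, 1 ≤ l i), ∏ i, f (l i)
      = ∑ l ∈ Finset.Nat.antidiagonalTuple k m, ∏ i, f (l i) := by
  refine Finset.sum_filter_of_ne fun l _ hne i => ?_
  by_contra h
  exact hne (Finset.prod_eq_zero (Finset.mem_univ i) (by rw [(by omega : l i = 0), hf]))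

lemma coeff_comp_eq (f g : ℕ → B) (hf : f 0 = 0) (hg : g 0 = 0) {n m : ℕ} (hm : m ≤ n) :
    ((polyOf g n).comp (polyOf f n)).coeff m
      = ∑ k ∈ Finset.Icc 1 m,
          (∑ l ∈ (Finset.Nat.antidiagonalTuple k m).filter (fun l => ∀ i, 1 ≤ l i),
            ∏ i, f (l i)) * g k := by
  have hP0 : (polyOf f n).coeff 0 = 0 := by rw [coeff_polyOf f (Nat.zero_le n), hf]
  have key : ∀ k, (polyOf f n ^ k).coeff m
      = ∑ l ∈ (Finset.Nat.antidiagonalTuple k m).filter (fun l => ∀ i, 1 ≤ l i),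
          ∏ i, f (l i) := fun k => by
    rw [coeff_polyOf_pow f hm, filter_tuple_sum f hf]
  conv_lhs => rw [polyOf, Polynomial.sum_comp]
  rw [finset_sum_coeff]
  simp only [C_mul_comp, X_pow_comp, coeff_C_mul]
  rw [← Finset.sum_subset (s₁ := Finset.Icc 1 m)
    (fun k hk => by rw [mem_Icc] at hk; exact mem_range.mpr (by omega))
    (fun k hk1 hk2 => by
      rw [mem_Icc] at hk2
      rcases Nat.eq_zero_or_pos k with h0 | h1
      · rw [h0, hg, zero_mul]
      · rw [coeff_pow_eq_zero hP0 (by omega), mul_zero])]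
  exact Finset.sum_congr rfl fun k _ => by rw [key k, mul_comm]

/-! ### Congruence lemmas for composition -/

lemma coeff_eq_of_dvd {z w : B[X]} {n : ℕ} (h : (X : B[X]) ^ (n + 1) ∣ z - w) :
    z.coeff n = w.coeff n := by
  have := X_pow_dvd_iff.mp h n (by omega)
  rw [coeff_sub, sub_eq_zero] at this
  exact this

lemma polyOf_trunc_dvd (P : B[X]) (n : ℕ) :
    (X : B[X]) ^ (n + 1) ∣ P - polyOf (fun m => P.coeff m) n :=
  X_pow_dvd_iff.mpr fun d hd => by
    rw [coeff_sub, coeff_polyOf _ (by omega : d ≤ n), sub_self]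

lemma comp_congr_left (Q P P' : B[X]) (n : ℕ) (h : (X : B[X]) ^ (n + 1) ∣ P - P') :
    (Q.comp P).coeff n = (Q.comp P').coeff n := by
  apply coeff_eq_of_dvd
  refine dvd_trans h ?_
  have e : ∀ R : B[X], Q.comp R = (Q.map C).eval R := fun R => (eval_map _ _).symm
  rw [e P, e P']
  exact sub_dvd_eval_sub P P' (Q.map C)

lemma comp_congr_right (Q Q' P : B[X]) (n : ℕ) (h : (X : B[X]) ^ (n + 1) ∣ Q - Q')
    (hP : P.coeff 0 = 0) : (Q.comp P).coeff n = (Q'.comp P).coeff n := by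
  apply coeff_eq_of_dvd
  obtain ⟨w, hw⟩ := h
  have : Q.comp P - Q'.comp P = P ^ (n + 1) * w.comp P := by
    rw [← sub_comp, hw, mul_comp, X_pow_comp]
  rw [this]
  exact Dvd.dvd.mul_right (pow_dvd_pow_of_dvd (X_dvd_iff.mpr hP) (n + 1)) _

/-! ### FdB-level lemmas -/

lemma FdBgen_zero : FdBgen 0 = 0 := by simp [FdBgen]
lemma FdBgen_one : FdBgen 1 = 1 := by simp [FdBgen]

lemma FdBcoprodVal_zero : FdBcoprodVal 0 = 0 := by
  simp [FdBcoprodVal]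

lemma FdBcoprodVal_one : FdBcoprodVal 1 = 1 := by
  rw [FdBcoprodVal]
  rw [Finset.Icc_self, Finset.sum_singleton, Finset.Nat.antidiagonalTuple_one]
  rw [show Finset.filter (fun l => ∀ i, 1 ≤ l i) ({![1]} : Finset (Fin 1 → ℕ)) = {![1]} from by
    rw [Finset.filter_singleton, if_pos (by decide)]]
  rw [Finset.sum_singleton, Fin.prod_univ_one]
  rw [show (![1] : Fin 1 → ℕ) 0 = 1 from rfl, FdBgen_one]
  exact (Algebra.TensorProduct.one_def).symm

lemma Delta_gen (Δ : FdB →ₐ[ℝ] FdB ⊗[ℝ] FdB)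
    (hΔ : ∀ (n : ℕ) (h : 2 ≤ n), Δ (MvPolynomial.X ⟨n, h⟩) = FdBcoprodVal n) (m : ℕ) :
    Δ (FdBgen m) = FdBcoprodVal m := by
  rcases Nat.lt_or_ge m 2 with h | h
  · interval_cases m
    · rw [FdBgen_zero, map_zero, FdBcoprodVal_zero]
    · rw [FdBgen_one, map_one, FdBcoprodVal_one]
  · rw [FdBgen, dif_pos h]
    exact hΔ m h

lemma psi_coprodVal {C : Type*} [CommRing C] [Algebra ℝ C] (ψ : FdB ⊗[ℝ] FdB →ₐ[ℝ] C) (m : ℕ) :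
    ψ (FdBcoprodVal m) = ∑ k ∈ Finset.Icc 1 m,
      (∑ l ∈ (Finset.Nat.antidiagonalTuple k m).filter (fun l => ∀ i, 1 ≤ l i),
        ∏ i, ψ (FdBgen (l i) ⊗ₜ[ℝ] 1)) * ψ ((1 : FdB) ⊗ₜ[ℝ] FdBgen k) := by
  rw [FdBcoprodVal, map_sum]
  refine Finset.sum_congr rfl fun k _ => ?_
  rw [show ∀ (S y : FdB), S ⊗ₜ[ℝ] y = (S ⊗ₜ[ℝ] (1 : FdB)) * ((1 : FdB) ⊗ₜ[ℝ] y) from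
    fun S y => by rw [Algebra.TensorProduct.tmul_mul_tmul, mul_one, one_mul], map_mul]
  congr 1
  have h1 : ∀ x : FdB, ψ (x ⊗ₜ[ℝ] (1 : FdB))
      = (ψ.comp (Algebra.TensorProduct.includeLeft : FdB →ₐ[ℝ] FdB ⊗[ℝ] FdB)) x := fun x => rfl
  rw [h1, map_sum]
  refine Finset.sum_congr rfl fun l _ => ?_
  rw [map_prod]
  exact Finset.prod_congr rfl fun i _ => (h1 _).symm

lemma psi_coprodVal_comp {C : Type*} [CommRing C] [Algebra ℝ C] (ψ : FdB ⊗[ℝ] FdB →ₐ[ℝ] C)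
    (f g : ℕ → C) (hf : ∀ m, ψ (FdBgen m ⊗ₜ[ℝ] 1) = f m)
    (hg : ∀ m, ψ ((1 : FdB) ⊗ₜ[ℝ] FdBgen m) = g m) {n m : ℕ} (hm : m ≤ n) :
    ψ (FdBcoprodVal m) = ((polyOf g n).comp (polyOf f n)).coeff m := by
  have hf0 : f 0 = 0 := by rw [← hf 0, FdBgen_zero]; simp
  have hg0 : g 0 = 0 := by rw [← hg 0, FdBgen_zero]; simp
  rw [coeff_comp_eq f g hf0 hg0 hm, psi_coprodVal]
  refine Finset.sum_congr rfl fun k _ => ?_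
  rw [hg]
  congr 1
  exact Finset.sum_congr rfl fun l _ => Finset.prod_congr rfl fun i _ => hf _

/-! ### The three embeddings into the triple tensor product -/

/-- abbreviation for the triple tensor product -/
abbrev T3 : Type := FdB ⊗[ℝ] (FdB ⊗[ℝ] FdB)

noncomputable instance : CommRing T3 := inferInstance
noncomputable instance : Algebra ℝ T3 := inferInstance

noncomputable def ff1 : ℕ → T3 := fun m => FdBgen m ⊗ₜ[ℝ] ((1 : FdB) ⊗ₜ[ℝ] (1 : FdB))
noncomputable def ff2 : ℕ → T3 := fun m => (1 : FdB) ⊗ₜ[ℝ] (FdBgen m ⊗ₜ[ℝ] (1 : FdB))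
noncomputable def ff3 : ℕ → T3 := fun m => (1 : FdB) ⊗ₜ[ℝ] ((1 : FdB) ⊗ₜ[ℝ] FdBgen m)

noncomputable def j12 : FdB ⊗[ℝ] FdB →ₐ[ℝ] T3 :=
  Algebra.TensorProduct.map (AlgHom.id ℝ FdB) Algebra.TensorProduct.includeLeft

noncomputable def j23 : FdB ⊗[ℝ] FdB →ₐ[ℝ] T3 := Algebra.TensorProduct.includeRight

noncomputable def inc1 : FdB →ₐ[ℝ] T3 := Algebra.TensorProduct.includeLeft

lemma j12_tmul (x y : FdB) : j12 (x ⊗ₜ[ℝ] y) = x ⊗ₜ[ℝ] (y ⊗ₜ[ℝ] (1 : FdB)) := by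
  simp [j12]

lemma h12 {n m : ℕ} (hm : m ≤ n) :
    j12 (FdBcoprodVal m) = ((polyOf ff2 n).comp (polyOf ff1 n)).coeff m :=
  psi_coprodVal_comp j12 ff1 ff2 (fun m => by rw [j12_tmul]; rfl)
    (fun m => by rw [j12_tmul]; rfl) hm

lemma h23 {n m : ℕ} (hm : m ≤ n) :
    j23 (FdBcoprodVal m) = ((polyOf ff3 n).comp (polyOf ff2 n)).coeff m :=
  psi_coprodVal_comp j23 ff2 ff3 (fun m => rfl) (fun m => rfl) hm

lemma ff1_zero : ff1 0 = 0 := by simp [ff1, FdBgen_zero]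
lemma ff3_zero : ff3 0 = 0 := by simp [ff3, FdBgen_zero]

lemma coeff_G_zero (n : ℕ) : ((polyOf ff2 n).comp (polyOf ff1 n)).coeff 0 = 0 := by
  rw [← h12 (Nat.zero_le n), FdBcoprodVal_zero, map_zero]

lemma coeff_H_zero (n : ℕ) : ((polyOf ff3 n).comp (polyOf ff2 n)).coeff 0 = 0 := by
  rw [← h23 (Nat.zero_le n), FdBcoprodVal_zero, map_zero]

lemma assoc_tmul_eq (u : FdB ⊗[ℝ] FdB) (z : FdB) :
    Algebra.TensorProduct.assoc ℝ ℝ ℝ FdB FdB FdB (u ⊗ₜ[ℝ] z)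
      = j12 u * ((1 : FdB) ⊗ₜ[ℝ] ((1 : FdB) ⊗ₜ[ℝ] z)) := by
  induction u using TensorProduct.induction_on with
  | zero => rw [TensorProduct.zero_tmul, map_zero, map_zero, zero_mul]
  | tmul x y =>
      rw [Algebra.TensorProduct.assoc_tmul, j12_tmul, Algebra.TensorProduct.tmul_mul_tmul,
        Algebra.TensorProduct.tmul_mul_tmul, mul_one, one_mul, mul_one]
  | add a b ha hb => rw [TensorProduct.add_tmul, map_add, map_add, add_mul, ha, hb]

lemma split_tmul (s : FdB) (v : FdB ⊗[ℝ] FdB) : s ⊗ₜ[ℝ] v = inc1 s * j23 v := by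
  show s ⊗ₜ[ℝ] v = (s ⊗ₜ[ℝ] 1) * ((1 : FdB) ⊗ₜ[ℝ] v)
  rw [Algebra.TensorProduct.tmul_mul_tmul, mul_one, one_mul]

end FdBAux

open FdBAux Finset Polynomial in
/-- The Faà di Bruno coproduct, i.e. the (unique) `ℝ`-algebra homomorphism
`Δ : FdB → FdB ⊗ FdB` with `Δ(a_n)` as displayed, is coassociative. -/
theorem stmt8 (Δ : FdB →ₐ[ℝ] FdB ⊗[ℝ] FdB)
    (hΔ : ∀ (n : ℕ) (h : 2 ≤ n), Δ (MvPolynomial.X ⟨n, h⟩) = FdBcoprodVal n) :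
    ∀ p : FdB,
      (Algebra.TensorProduct.assoc ℝ ℝ ℝ FdB FdB FdB)
          ((Algebra.TensorProduct.map Δ (AlgHom.id ℝ FdB)) (Δ p)) =
        (Algebra.TensorProduct.map (AlgHom.id ℝ FdB) Δ) (Δ p) := by
  suffices h : ((Algebra.TensorProduct.assoc ℝ ℝ ℝ FdB FdB FdB).toAlgHom.comp
      ((Algebra.TensorProduct.map Δ (AlgHom.id ℝ FdB)).comp Δ))
      = (Algebra.TensorProduct.map (AlgHom.id ℝ FdB) Δ).comp Δ by
    intro p
    simpa using DFunLike.congr_fun h p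
  apply MvPolynomial.algHom_ext
  rintro ⟨n, hn⟩
  simp only [AlgHom.comp_apply, AlgEquiv.toAlgHom_eq_coe, AlgHom.coe_coe]
  rw [hΔ n hn]
  -- notation
  set P1 : Polynomial T3 := polyOf ff1 n with hP1
  set P2 : Polynomial T3 := polyOf ff2 n with hP2
  set P3 : Polynomial T3 := polyOf ff3 n with hP3
  have hP10 : P1.coeff 0 = 0 := by rw [hP1, coeff_polyOf ff1 (Nat.zero_le n), ff1_zero]
  -- left hand side
  have hL : (Algebra.TensorProduct.assoc ℝ ℝ ℝ FdB FdB FdB)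
      ((Algebra.TensorProduct.map Δ (AlgHom.id ℝ FdB)) (FdBcoprodVal n))
      = ∑ k ∈ Finset.Icc 1 n,
          (∑ l ∈ (Finset.Nat.antidiagonalTuple k n).filter (fun l => ∀ i, 1 ≤ l i),
            ∏ i, (P2.comp P1).coeff (l i)) * ff3 k := by
    rw [FdBcoprodVal, map_sum, map_sum]
    refine Finset.sum_congr rfl fun k hk => ?_
    rw [Algebra.TensorProduct.map_tmul, AlgHom.coe_id, id_eq, assoc_tmul_eq]
    congr 1
    · rw [show ∀ x : FdB, j12 (Δ x) = (j12.comp Δ) x from fun _ => rfl, map_sum]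
      refine Finset.sum_congr rfl fun l hl => ?_
      rw [map_prod]
      refine Finset.prod_congr rfl fun i _ => ?_
      rw [AlgHom.comp_apply, Delta_gen Δ hΔ, h12 (n := n)]
      rw [Finset.mem_filter, Finset.Nat.mem_antidiagonalTuple] at hl
      exact hl.1 ▸ Finset.single_le_sum (fun _ _ => Nat.zero_le _) (Finset.mem_univ i)
  -- right hand side
  have hR : (Algebra.TensorProduct.map (AlgHom.id ℝ FdB) Δ) (FdBcoprodVal n)
      = ∑ k ∈ Finset.Icc 1 n,
          (∑ l ∈ (Finset.Nat.antidiagonalTuple k n).filter (fun l => ∀ i, 1 ≤ l i),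
            ∏ i, ff1 (l i)) * (P3.comp P2).coeff k := by
    rw [FdBcoprodVal, map_sum]
    refine Finset.sum_congr rfl fun k hk => ?_
    rw [Algebra.TensorProduct.map_tmul, AlgHom.coe_id, id_eq, Delta_gen Δ hΔ, split_tmul]
    congr 1
    · rw [map_sum]
      refine Finset.sum_congr rfl fun l _ => ?_
      rw [map_prod]
      rfl
    · rw [h23 (n := n)]
      rw [Finset.mem_Icc] at hk
      exact hk.2
  erw [hL]; rw [hR]
  have hG0 := coeff_G_zero n
  have hH0 := coeff_H_zero n
  rw [show (∑ k ∈ Finset.Icc 1 n,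
        (∑ l ∈ (Finset.Nat.antidiagonalTuple k n).filter (fun l => ∀ i, 1 ≤ l i),
          ∏ i, (P2.comp P1).coeff (l i)) * ff3 k)
      = ((polyOf ff3 n).comp (polyOf (fun m => (P2.comp P1).coeff m) n)).coeff n from
    (coeff_comp_eq _ ff3 hG0 ff3_zero (le_refl n)).symm]
  rw [show (∑ k ∈ Finset.Icc 1 n,
        (∑ l ∈ (Finset.Nat.antidiagonalTuple k n).filter (fun l => ∀ i, 1 ≤ l i),
          ∏ i, ff1 (l i)) * (P3.comp P2).coeff k)
      = ((polyOf (fun m => (P3.comp P2).coeff m) n).comp (polyOf ff1 n)).coeff n from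
    (coeff_comp_eq ff1 _ (by rw [ff1_zero]) hH0 (le_refl n)).symm]
  rw [show ((polyOf ff3 n).comp (polyOf (fun m => (P2.comp P1).coeff m) n)).coeff n
      = ((polyOf ff3 n).comp (P2.comp P1)).coeff n from
    (comp_congr_left _ _ _ n (polyOf_trunc_dvd (P2.comp P1) n)).symm]
  rw [show ((polyOf (fun m => (P3.comp P2).coeff m) n).comp (polyOf ff1 n)).coeff n
      = ((P3.comp P2).comp (polyOf ff1 n)).coeff n from
    (comp_congr_right _ _ _ n (polyOf_trunc_dvd (P3.comp P2) n) hP10).symm]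
  rw [← hP1, ← hP3, Polynomial.comp_assoc]
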